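/- Let G be the graph on vertices {v_1,…,v_5} with edges {v_4,v_1},{v_4,v_2},{v_4,v_3},{v_5,v_1},{v_5,v_2}, and let k ≥ 2 with distinct classes a, b. Then for every connected k-subpartition {V_i} of G with incidence vector x: Σ_{i=1}^{3}(x_{v_i,a} + x_{v_i,b}) − Σ_{i=4}^{5}(x_{v_i,a} + x_{v_i,b}) ≤ 2. -/

import Mathlib

open scoped Classical

/-- A connected `k`-subpartition of `G`. -/
def ConnKSub {V : Type*} (G : SimpleGraph V) (k : ℕ) (P : Fin k → Set V) : Prop :=
  (∀ i j, i ≠ j → Disjoint (P i) (P j)) ∧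
    ∀ i, P i = ∅ ∨ (G.induce (P i)).Connected

/-- The graph on `v₁,…,v₅` (as `0,…,4`) with edges
`{v₄,v₁},{v₄,v₂},{v₄,v₃},{v₅,v₁},{v₅,v₂}`. -/
def G17 : SimpleGraph (Fin 5) :=
  SimpleGraph.fromEdgeSet {s(3, 0), s(3, 1), s(3, 2), s(4, 0), s(4, 1)}

lemma adj_step17 {V : Type*} (G : SimpleGraph V) (S : Set V)
    (h : (G.induce S).Connected) {u v : V} (hu : u ∈ S) (hv : v ∈ S)
    (huv : u ≠ v) : ∃ w, w ∈ S ∧ G.Adj u w := by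
  obtain ⟨p⟩ := h ⟨u, hu⟩ ⟨v, hv⟩
  cases p with
  | nil => exact absurd rfl huv
  | cons h' p' => exact ⟨_, (by exact Subtype.coe_prop _), h'⟩

lemma G17_adj2 : ∀ w : Fin 5, G17.Adj 2 w → w = 3 := by
  intro w
  simp only [G17, SimpleGraph.fromEdgeSet_adj, Set.mem_insert_iff, Set.mem_singleton_iff]
  fin_cases w <;> decide

lemma G17_adj0 : ∀ w : Fin 5, G17.Adj 0 w → w = 3 ∨ w = 4 := by
  intro w
  simp only [G17, SimpleGraph.fromEdgeSet_adj, Set.mem_insert_iff, Set.mem_singleton_iff]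
  fin_cases w <;> decide

/-- Structural facts about a connected part of `G17`. -/
lemma G17_part_facts (S : Set (Fin 5)) (hS : S = ∅ ∨ (G17.induce S).Connected) :
    ((2 : Fin 5) ∈ S → (0 : Fin 5) ∈ S → (3 : Fin 5) ∈ S) ∧
    ((2 : Fin 5) ∈ S → (1 : Fin 5) ∈ S → (3 : Fin 5) ∈ S) ∧
    ((0 : Fin 5) ∈ S → (1 : Fin 5) ∈ S → (3 : Fin 5) ∈ S ∨ (4 : Fin 5) ∈ S) := by
  refine ⟨?_, ?_, ?_⟩
  · intro h2 h0
    rcases hS with rfl | hc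
    · exact absurd h2 (by simp)
    obtain ⟨w, hw, hadj⟩ := adj_step17 G17 S hc h2 h0 (by decide)
    have := G17_adj2 w hadj
    subst this; exact hw
  · intro h2 h1
    rcases hS with rfl | hc
    · exact absurd h2 (by simp)
    obtain ⟨w, hw, hadj⟩ := adj_step17 G17 S hc h2 h1 (by decide)
    have := G17_adj2 w hadj
    subst this; exact hw
  · intro h0 h1
    rcases hS with rfl | hc
    · exact absurd h0 (by simp)
    obtain ⟨w, hw, hadj⟩ := adj_step17 G17 S hc h0 h1 (by decide)
    rcases G17_adj0 w hadj with rfl | rfl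
    · exact Or.inl hw
    · exact Or.inr hw

lemma key17 (xa0 xa1 xa2 xa3 xa4 xb0 xb1 xb2 xb3 xb4 : ℤ)
    (ha0 : 0 ≤ xa0 ∧ xa0 ≤ 1) (ha1 : 0 ≤ xa1 ∧ xa1 ≤ 1) (ha2 : 0 ≤ xa2 ∧ xa2 ≤ 1)
    (ha3 : 0 ≤ xa3 ∧ xa3 ≤ 1) (ha4 : 0 ≤ xa4 ∧ xa4 ≤ 1)
    (hb0 : 0 ≤ xb0 ∧ xb0 ≤ 1) (hb1 : 0 ≤ xb1 ∧ xb1 ≤ 1) (hb2 : 0 ≤ xb2 ∧ xb2 ≤ 1)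
    (hb3 : 0 ≤ xb3 ∧ xb3 ≤ 1) (hb4 : 0 ≤ xb4 ∧ xb4 ≤ 1)
    (d0 : xa0 + xb0 ≤ 1) (d1 : xa1 + xb1 ≤ 1) (d2 : xa2 + xb2 ≤ 1)
    (ca1 : xa2 + xa0 ≤ 1 + xa3) (ca2 : xa2 + xa1 ≤ 1 + xa3)
    (ca3 : xa0 + xa1 ≤ 1 + xa3 + xa4)
    (cb1 : xb2 + xb0 ≤ 1 + xb3) (cb2 : xb2 + xb1 ≤ 1 + xb3)
    (cb3 : xb0 + xb1 ≤ 1 + xb3 + xb4) :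
    (xa0 + xb0) + ((xa1 + xb1) + (xa2 + xb2)) - ((xa3 + xb3) + (xa4 + xb4)) ≤ 2 := by
  omega

set_option maxHeartbeats 1000000 in
theorem stmt17 (k : ℕ) (hk : 2 ≤ k) (a b : Fin k) (hab : a ≠ b)
    (P : Fin k → Set (Fin 5)) (hP : ConnKSub G17 k P) :
    (∑ i ∈ ({0, 1, 2} : Finset (Fin 5)),
        ((if i ∈ P a then (1 : ℤ) else 0) + (if i ∈ P b then 1 else 0))) -
      (∑ i ∈ ({3, 4} : Finset (Fin 5)),
        ((if i ∈ P a then (1 : ℤ) else 0) + (if i ∈ P b then 1 else 0))) ≤ 2 := by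
  obtain ⟨hdisj, hconn⟩ := hP
  have hd : ∀ v, v ∈ P a → v ∉ P b := fun v hv => Set.disjoint_left.mp (hdisj a b hab) hv
  obtain ⟨fa1, fa2, fa3⟩ := G17_part_facts (P a) (hconn a)
  obtain ⟨fb1, fb2, fb3⟩ := G17_part_facts (P b) (hconn b)
  have hsum : (∑ i ∈ ({0, 1, 2} : Finset (Fin 5)),
        ((if i ∈ P a then (1 : ℤ) else 0) + (if i ∈ P b then 1 else 0))) -
      (∑ i ∈ ({3, 4} : Finset (Fin 5)),
        ((if i ∈ P a then (1 : ℤ) else 0) + (if i ∈ P b then 1 else 0))) =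
      (((if (0 : Fin 5) ∈ P a then (1 : ℤ) else 0) + (if (0 : Fin 5) ∈ P b then 1 else 0)) +
        (((if (1 : Fin 5) ∈ P a then (1 : ℤ) else 0) + (if (1 : Fin 5) ∈ P b then 1 else 0)) +
          ((if (2 : Fin 5) ∈ P a then (1 : ℤ) else 0) + (if (2 : Fin 5) ∈ P b then 1 else 0)))) -
      ((((if (3 : Fin 5) ∈ P a then (1 : ℤ) else 0) + (if (3 : Fin 5) ∈ P b then 1 else 0)) +
        ((if (4 : Fin 5) ∈ P a then (1 : ℤ) else 0) + (if (4 : Fin 5) ∈ P b then 1 else 0)))) := by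
    rw [Finset.sum_insert (by decide), Finset.sum_insert (by decide), Finset.sum_singleton,
      Finset.sum_insert (by decide), Finset.sum_singleton]
  rw [hsum]
  apply key17
  all_goals split_ifs <;> try omega
  all_goals simp_all
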